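/- Let N be a positive integer and suppose that for every integer n with 1 ≤ n ≤ N, both intervals [n², n(n+1)] and [n(n+1), (n+1)²] contain a prime. Then for every real y with 1 ≤ y < N, the interval [y², (y+1)²] contains a prime. -/
import Mathlib


theorem stmt_4 (N : ℕ) (hN : 0 < N)
    (h : ∀ n : ℕ, 1 ≤ n → n ≤ N →
      (∃ p : ℕ, p.Prime ∧ n ^ 2 ≤ p ∧ p ≤ n * (n + 1)) ∧
      (∃ p : ℕ, p.Prime ∧ n * (n + 1) ≤ p ∧ p ≤ (n + 1) ^ 2)) :
    ∀ y : ℝ, 1 ≤ y → y < (N : ℝ) →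
      ∃ p : ℕ, p.Prime ∧ y ^ 2 ≤ (p : ℝ) ∧ (p : ℝ) ≤ (y + 1) ^ 2 := by
  intro y hy1 hyN
  set n : ℕ := ⌊y⌋₊ with hn
  have hy0 : 0 ≤ y := le_trans zero_le_one hy1
  have hn1 : 1 ≤ n := Nat.le_floor (by exact_mod_cast hy1)
  have hny : (n : ℝ) ≤ y := Nat.floor_le hy0
  have hylt : y < (n : ℝ) + 1 := Nat.lt_floor_add_one y
  have hnN : n < N := by
    have : (n : ℝ) < N := lt_of_le_of_lt hny hyN
    exact_mod_cast this
  by_cases hc : y ^ 2 ≤ ((n * (n + 1) : ℕ) : ℝ)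
  · obtain ⟨p, hp, hp1, hp2⟩ := (h n hn1 hnN.le).2
    refine ⟨p, hp, le_trans hc (by exact_mod_cast hp1), ?_⟩
    have h2 : (p : ℝ) ≤ ((n : ℝ) + 1) ^ 2 := by exact_mod_cast hp2
    nlinarith
  · push_neg at hc
    obtain ⟨p, hp, hp1, hp2⟩ := (h (n + 1) (by omega) (by omega)).1
    have hpne : p ≠ (n + 1) * (n + 2) := by
      intro he
      have : ¬ ((n + 1) * (n + 2)).Prime :=
        Nat.not_prime_mul (by omega) (by omega)
      exact this (he ▸ hp)
    have hple : p ≤ n ^ 2 + 3 * n + 1 := by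
      have h3 : p < (n + 1) * (n + 2) := lt_of_le_of_ne hp2 hpne
      nlinarith
    refine ⟨p, hp, ?_, ?_⟩
    · have h1 : ((n : ℝ) + 1) ^ 2 ≤ p := by exact_mod_cast hp1
      nlinarith
    · have h2 : (p : ℝ) ≤ (n : ℝ) ^ 2 + 3 * n + 1 := by exact_mod_cast hple
      have hc' : (n : ℝ) * (n + 1) < y ^ 2 := by
        push_cast at hc; linarith
      nlinarith
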